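/- Let U be an open subset of ℝⁿ, let X be a smooth closed hypersurface in U or a smoothly bordered domain in U, and let x be a point of the boundary ∂X. Then U∖X is not thin at x. -/

import Mathlib

open Metric Set Filter Topology MeasureTheory
open scoped NNReal ENNReal

noncomputable section

abbrev Euc (k : ℕ) := EuclideanSpace ℝ (Fin k)

/-- Second directional derivative of `u` at `x`, twice in the direction `v`. -/
def DirDeriv2 {X : Type*} [NormedAddCommGroup X] [NormedSpace ℝ X]
    (u : X → ℝ) (v : X) (x : X) : ℝ :=
  fderiv ℝ (fun y => fderiv ℝ u y v) x v

/-- Mixed second derivative of `u` at `x` in the directions `v`, `w`. -/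
def MixedDeriv2 {X : Type*} [NormedAddCommGroup X] [NormedSpace ℝ X]
    (u : X → ℝ) (v w : X) (x : X) : ℝ :=
  fderiv ℝ (fun y => fderiv ℝ u y w) x v

/-- The Euclidean Laplacian. -/
def EucLap {k : ℕ} (u : Euc k → ℝ) (x : Euc k) : ℝ :=
  ∑ i, DirDeriv2 u (EuclideanSpace.single i 1) x

/-- `u` is (classically) harmonic on the open set `U` : it is `C²` and `Δ u = 0` on `U`. -/
def HarmOn {k : ℕ} (u : Euc k → ℝ) (U : Set (Euc k)) : Prop :=
  IsOpen U ∧ ContDiffOn ℝ 2 u U ∧ ∀ x ∈ U, EucLap u x = 0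

/-- `u : Euc k → EReal` is superharmonic on the open set `W`: it is lower semicontinuous,
`> -∞`, not `≡ +∞` on any component, and dominates on every ball every harmonic function
which it dominates on the boundary sphere (the classical comparison characterization of
distributional `Δ u ≤ 0`). -/
def SuperharmOn {k : ℕ} (u : Euc k → EReal) (W : Set (Euc k)) : Prop :=
  IsOpen W ∧ LowerSemicontinuousOn u W ∧ (∀ x ∈ W, u x ≠ ⊥) ∧
    (∀ x ∈ W, ∃ y ∈ connectedComponentIn W x, u y ≠ ⊤) ∧
    ∀ (x : Euc k) (r : ℝ), 0 < r → closedBall x r ⊆ W →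
      ∀ h : Euc k → ℝ, ContinuousOn h (closedBall x r) → HarmOn h (ball x r) →
        (∀ y ∈ sphere x r, (h y : EReal) ≤ u y) →
        ∀ y ∈ ball x r, (h y : EReal) ≤ u y

/-- A set `A ⊆ ℝᵏ` is polar: some superharmonic function on an open `W ⊇ A`
is `+∞` on all of `A`. -/
def EucPolar {k : ℕ} (A : Set (Euc k)) : Prop :=
  ∃ (W : Set (Euc k)) (u : Euc k → EReal),
    IsOpen W ∧ A ⊆ W ∧ SuperharmOn u W ∧ ∀ x ∈ A, u x = ⊤

/-- A set `A` is thin at `y`. -/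
def EucThinAt {k : ℕ} (A : Set (Euc k)) (y : Euc k) : Prop :=
  y ∉ closure (A \ {y}) ∨
    ∃ W : Set (Euc k), IsOpen W ∧ y ∈ W ∧
      ∃ u : Euc k → EReal, SuperharmOn u W ∧ u y < Filter.liminf u (𝓝[A \ {y}] y)

/-- A subset `A` of the unit sphere `S^{k-1}` is (spherically) polar, i.e. polar for the
intrinsic potential theory of the round sphere; equivalently (Fuglede), the radial
cone over `A` is polar in `ℝᵏ`. -/
def SphPolar {k : ℕ} (A : Set (Euc k)) : Prop :=
  EucPolar {x : Euc k | x ≠ 0 ∧ ‖x‖⁻¹ • x ∈ A}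

/-- The radial function of a set `U`, with values in `[0,+∞]`. -/
def radialE {k : ℕ} (U : Set (Euc k)) (θ : Euc k) : EReal :=
  sSup ((fun ρ : ℝ => (ρ : EReal)) '' {ρ : ℝ | 0 ≤ ρ ∧ ρ • θ ∈ U})

/-- `U` is a strictly starlike domain (with respect to the origin). -/
def IsStrictStar {k : ℕ} (U : Set (Euc k)) : Prop :=
  IsOpen U ∧ IsConnected U ∧ ∀ p ∈ closure U, ∀ t : ℝ, 0 ≤ t → t < 1 → t • p ∈ U

/-- The filter of real numbers `ρ ↑ c` (for an extended real `c`). -/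
def upFilter (c : EReal) : Filter ℝ :=
  Filter.comap (fun ρ : ℝ => (ρ : EReal)) (𝓝[<] c)

/-- The filter of real numbers `ρ ↓ c` (for an extended real `c`). -/
def downFilter (c : EReal) : Filter ℝ :=
  Filter.comap (fun ρ : ℝ => (ρ : EReal)) (𝓝[>] c)

/-- The filter describing the radial approach `ρ ↗ R(θ)` in a starlike domain. -/
def radialFilter {k : ℕ} (U : Set (Euc k)) (θ : Euc k) : Filter ℝ :=
  upFilter (radialE U θ) ⊓ 𝓟 (Ici (0:ℝ))

/-- A second order partial differential operator
`L = ∑ aᵢⱼ ∂²/∂xᵢ∂xⱼ + ∑ bᵢ ∂/∂xᵢ + c` on a domain `Ω ⊆ ℝᵏ`, with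
`aᵢⱼ = aⱼᵢ ∈ C^{2,1}`, `bᵢ ∈ C^{1,1}`, `c ∈ C^{0,1}`, `c ≤ 0`, and `(aᵢⱼ)`
positive definite on `Ω` (so `L` is elliptic). -/
structure EllipticOp (k : ℕ) (Ω : Set (Euc k)) where
  a : Fin k → Fin k → Euc k → ℝ
  b : Fin k → Euc k → ℝ
  c : Euc k → ℝ
  symm : ∀ i j x, a i j x = a j i x
  a_C2 : ∀ i j, ContDiffOn ℝ 2 (a i j) Ω
  a_lip : ∀ i j, ∀ x ∈ Ω, ∃ t ∈ 𝓝 x, ∃ K : ℝ≥0,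
    LipschitzOnWith K (iteratedFDerivWithin ℝ 2 (a i j) Ω) (t ∩ Ω)
  b_C1 : ∀ i, ContDiffOn ℝ 1 (b i) Ω
  b_lip : ∀ i, ∀ x ∈ Ω, ∃ t ∈ 𝓝 x, ∃ K : ℝ≥0,
    LipschitzOnWith K (iteratedFDerivWithin ℝ 1 (b i) Ω) (t ∩ Ω)
  c_C0 : ContinuousOn c Ω
  c_lip : ∀ x ∈ Ω, ∃ t ∈ 𝓝 x, ∃ K : ℝ≥0, LipschitzOnWith K c (t ∩ Ω)
  c_nonpos : ∀ x ∈ Ω, c x ≤ 0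
  posdef : ∀ x ∈ Ω, ∀ v : Fin k → ℝ, v ≠ 0 → 0 < ∑ i, ∑ j, a i j x * v i * v j

/-- The action of the operator `L` on a function `u`. -/
def EllipticOp.app {k : ℕ} {Ω : Set (Euc k)} (L : EllipticOp k Ω)
    (u : Euc k → ℝ) (x : Euc k) : ℝ :=
  (∑ i, ∑ j, L.a i j x *
      MixedDeriv2 u (EuclideanSpace.single i 1) (EuclideanSpace.single j 1) x) +
    (∑ i, L.b i x * fderiv ℝ u x (EuclideanSpace.single i 1)) + L.c x * u x

/-- `u` is `L`-harmonic on the open set `U ⊆ Ω` : `u ∈ C²(U)` and `L u = 0` on `U`. -/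
def LHarmOn {k : ℕ} {Ω : Set (Euc k)} (L : EllipticOp k Ω)
    (u : Euc k → ℝ) (U : Set (Euc k)) : Prop :=
  U ⊆ Ω ∧ IsOpen U ∧ ContDiffOn ℝ 2 u U ∧ ∀ x ∈ U, L.app u x = 0

/-- `u : Euc k → EReal` is `L`-superharmonic on the open set `W ⊆ Ω`
(comparison characterization of the lower semicontinuous distributional
solutions of `L u ≤ 0`). -/
def LSuperharmOn {k : ℕ} {Ω : Set (Euc k)} (L : EllipticOp k Ω)
    (u : Euc k → EReal) (W : Set (Euc k)) : Prop :=
  W ⊆ Ω ∧ IsOpen W ∧ LowerSemicontinuousOn u W ∧ (∀ x ∈ W, u x ≠ ⊥) ∧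
    (∀ x ∈ W, ∃ y ∈ connectedComponentIn W x, u y ≠ ⊤) ∧
    ∀ (x : Euc k) (r : ℝ), 0 < r → closedBall x r ⊆ W →
      ∀ h : Euc k → ℝ, ContinuousOn h (closedBall x r) → LHarmOn L h (ball x r) →
        (∀ y ∈ sphere x r, (h y : EReal) ≤ u y) →
        ∀ y ∈ ball x r, (h y : EReal) ≤ u y

/-- There exists an `L`-superharmonic function `> 0` on `D` which is not `L`-harmonic. -/
def HasLPotentialOn {k : ℕ} {Ω : Set (Euc k)} (L : EllipticOp k Ω) (D : Set (Euc k)) : Prop :=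
  ∃ u : Euc k → EReal, LSuperharmOn L u D ∧ (∀ x ∈ D, 0 < u x) ∧
    ¬ ∃ v : Euc k → ℝ, LHarmOn L v D ∧ ∀ x ∈ D, u x = (v x : EReal)

/-- `K` is an `L`-Mergelyan set in the domain `D`. -/
def LMergelyan {k : ℕ} {Ω : Set (Euc k)} (L : EllipticOp k Ω) (D K : Set (Euc k)) : Prop :=
  IsCompact K ∧ K ⊆ D ∧
    ∀ u : Euc k → ℝ, ContinuousOn u K → LHarmOn L u (interior K) →
      ∀ ε : ℝ, 0 < ε → ∃ v : Euc k → ℝ, LHarmOn L v D ∧ ∀ x ∈ K, |v x - u x| < ε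

/-- `S` is an `L`-Carleman set in the domain `D` (`S` is closed in `D`). -/
def LCarleman {k : ℕ} {Ω : Set (Euc k)} (L : EllipticOp k Ω) (D S : Set (Euc k)) : Prop :=
  S ⊆ D ∧ closure S ∩ D ⊆ S ∧
    ∀ u : Euc k → ℝ, ContinuousOn u S → LHarmOn L u (interior S) →
      ∀ ε : Euc k → ℝ, ContinuousOn ε S → (∀ x ∈ S, ε x ∈ Ioc (0:ℝ) 1) →
        ∃ v : Euc k → ℝ, LHarmOn L v D ∧ ∀ x ∈ S, |v x - u x| < ε x

/-- `C` is a chaplet in the domain `D`: the union of a locally finite (in `D`) family of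
pairwise disjoint, connected, compact `L`-Mergelyan sets contained in `D`, whose
complements in `ℝᵏ` are connected. -/
def LChaplet {k : ℕ} {Ω : Set (Euc k)} (L : EllipticOp k Ω) (D C : Set (Euc k)) : Prop :=
  ∃ 𝒬 : Set (Set (Euc k)),
    C = ⋃₀ 𝒬 ∧
    (∀ x ∈ D, ∃ t ∈ 𝓝 x, {q ∈ 𝒬 | (q ∩ t).Nonempty}.Finite) ∧
    (𝒬.Pairwise Disjoint) ∧
    ∀ q ∈ 𝒬, IsCompact q ∧ IsConnected q ∧ q ⊆ D ∧ IsConnected qᶜ ∧ LMergelyan L D q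

/-- The union of `F` with all of its holes (the bounded components of `D \ F`),
relative to the domain `D`. -/
def hullIn {k : ℕ} (D F : Set (Euc k)) : Set (Euc k) :=
  F ∪ {x | x ∈ D \ F ∧ IsCompact (closure (connectedComponentIn (D \ F) x)) ∧
        closure (connectedComponentIn (D \ F) x) ⊆ D}


/-- `X` is a smooth closed hypersurface in the open set `U`: it is closed in `U` and is
locally the regular zero set of a smooth function. -/
def IsSmoothClosedHypersurfaceIn {k : ℕ} (X U : Set (Euc k)) : Prop :=
  X ⊆ U ∧ closure X ∩ U ⊆ X ∧
    ∀ x ∈ X, ∃ (V : Set (Euc k)) (f : Euc k → ℝ), IsOpen V ∧ x ∈ V ∧ V ⊆ U ∧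
      ContDiff ℝ (⊤ : ℕ∞) f ∧ (∀ y ∈ V, (y ∈ X ↔ f y = 0)) ∧ ∀ y ∈ V, fderiv ℝ f y ≠ 0

/-- `X` is a smoothly bordered domain in the open set `U`: it is closed in `U`, is the
closure (in `U`) of its connected interior, and near each of its boundary points in `U`
it is a smooth sublevel set `{f ≤ 0}` of a smooth function with nonvanishing gradient. -/
def IsSmoothlyBorderedDomainIn {k : ℕ} (X U : Set (Euc k)) : Prop :=
  X ⊆ U ∧ closure X ∩ U ⊆ X ∧ IsConnected (interior X) ∧ X ⊆ closure (interior X) ∧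
    ∀ x ∈ frontier X ∩ U, ∃ (V : Set (Euc k)) (f : Euc k → ℝ), IsOpen V ∧ x ∈ V ∧ V ⊆ U ∧
      ContDiff ℝ (⊤ : ℕ∞) f ∧ (∀ y ∈ V, (y ∈ X ↔ f y ≤ 0)) ∧ ∀ y ∈ V, fderiv ℝ f y ≠ 0

section NotThinAux

open scoped RealInnerProductSpace

/-- The explicit quadratic harmonic comparison function. -/
def cmpF (n : ℕ) (x e : Euc n) (a c1 c2 : ℝ) : Euc n → ℝ :=
  fun y => a + c1 * ⟪e, y - x⟫ +
    c2 * ((n:ℝ) * (⟪e, y - x⟫ * ⟪e, y - x⟫) - ⟪y - x, y - x⟫)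

lemma cmpF_contDiff (m : WithTop ℕ∞) (n : ℕ) (x e : Euc n) (a c1 c2 : ℝ) :
    ContDiff ℝ m (cmpF n x e a c1 c2) := by
  have h0 : ContDiff ℝ m (fun y : Euc n => y - x) := contDiff_id.sub contDiff_const
  have h1 : ContDiff ℝ m (fun y : Euc n => ⟪e, y - x⟫) :=
    ContDiff.inner ℝ contDiff_const h0
  have h2 : ContDiff ℝ m (fun y : Euc n => ⟪y - x, y - x⟫) := ContDiff.inner ℝ h0 h0
  exact (contDiff_const.add (contDiff_const.mul h1)).add
    (contDiff_const.mul ((contDiff_const.mul (h1.mul h1)).sub h2))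

lemma cmpF_fderiv (n : ℕ) (x e : Euc n) (a c1 c2 : ℝ) (y v : Euc n) :
    fderiv ℝ (cmpF n x e a c1 c2) y v =
      c1 * ⟪e, v⟫ + c2 * ((n:ℝ) * (⟪e, y - x⟫ * ⟪e, v⟫ + ⟪e, y - x⟫ * ⟪e, v⟫)
        - (⟪y - x, v⟫ + ⟪v, y - x⟫)) := by
  have hA : HasFDerivAt (fun y : Euc n => y - x) (ContinuousLinearMap.id ℝ (Euc n)) y := by
    simpa using (hasFDerivAt_id y).sub_const x
  have hw : HasFDerivAt (fun y : Euc n => ⟪e, y - x⟫) (innerSL ℝ e) y := by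
    exact ((innerSL ℝ e).hasFDerivAt (x := y - x)).comp y hA
  have hq : HasFDerivAt (fun y : Euc n => ⟪y - x, y - x⟫)
      ((fderivInnerCLM ℝ (y - x, y - x)).comp ((ContinuousLinearMap.id ℝ (Euc n)).prod
        (ContinuousLinearMap.id ℝ (Euc n)))) y := HasFDerivAt.inner ℝ hA hA
  have hh := ((hasFDerivAt_const a y).add (hw.const_mul c1)).add
    ((((hw.mul hw).const_mul (n:ℝ)).sub hq).const_mul c2)
  rw [show cmpF n x e a c1 c2 = fun y => a + c1 * ⟪e, y - x⟫ +
    c2 * ((n:ℝ) * (⟪e, y - x⟫ * ⟪e, y - x⟫) - ⟪y - x, y - x⟫) from rfl, (show HasFDerivAt (fun y : Euc n => a + c1 * ⟪e, y - x⟫ +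
    c2 * ((n:ℝ) * (⟪e, y - x⟫ * ⟪e, y - x⟫) - ⟪y - x, y - x⟫)) _ y from hh).fderiv]
  simp only [ContinuousLinearMap.add_apply, ContinuousLinearMap.smul_apply,
    ContinuousLinearMap.zero_apply, ContinuousLinearMap.comp_apply,
    ContinuousLinearMap.sub_apply, ContinuousLinearMap.prod_apply,
    ContinuousLinearMap.coe_id', id_eq, fderivInnerCLM_apply, innerSL_apply_apply, smul_eq_mul]
  ring

lemma cmpF_dd2 (n : ℕ) (x e : Euc n) (a c1 c2 : ℝ) (p v : Euc n) :
    DirDeriv2 (cmpF n x e a c1 c2) v p =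
      2 * (n:ℝ) * c2 * (⟪e, v⟫ * ⟪e, v⟫) - 2 * c2 * ⟪v, v⟫ := by
  have hG : (fun y => fderiv ℝ (cmpF n x e a c1 c2) y v) =
      fun y : Euc n => (c1 * ⟪e, v⟫) + (2 * (n:ℝ) * c2 * ⟪e, v⟫) * ⟪e, y - x⟫ +
        (-2 * c2) * ⟪v, y - x⟫ := by
    funext y
    rw [cmpF_fderiv, real_inner_comm (y - x) v]
    ring
  have hA : HasFDerivAt (fun y : Euc n => y - x) (ContinuousLinearMap.id ℝ (Euc n)) p := by
    simpa using (hasFDerivAt_id p).sub_const x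
  have hw : HasFDerivAt (fun y : Euc n => ⟪e, y - x⟫) (innerSL ℝ e) p := by
    exact ((innerSL ℝ e).hasFDerivAt (x := p - x)).comp p hA
  have hv : HasFDerivAt (fun y : Euc n => ⟪v, y - x⟫) (innerSL ℝ v) p := by
    exact ((innerSL ℝ v).hasFDerivAt (x := p - x)).comp p hA
  have hh := ((hasFDerivAt_const (c1 * ⟪e, v⟫) p).add
    (hw.const_mul (2 * (n:ℝ) * c2 * ⟪e, v⟫))).add (hv.const_mul (-2 * c2))
  rw [DirDeriv2, hG, (show HasFDerivAt (fun y : Euc n => (c1 * ⟪e, v⟫) + (2 * (n:ℝ) * c2 * ⟪e, v⟫) * ⟪e, y - x⟫ +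
          (-2 * c2) * ⟪v, y - x⟫) _ p from hh).fderiv]
  simp only [ContinuousLinearMap.add_apply, ContinuousLinearMap.smul_apply,
    ContinuousLinearMap.zero_apply, innerSL_apply_apply, smul_eq_mul]
  ring

lemma cmpF_lap (n : ℕ) (x e : Euc n) (he : ‖e‖ = 1) (a c1 c2 : ℝ) (p : Euc n) :
    EucLap (cmpF n x e a c1 c2) p = 0 := by
  have hsum : ∑ i, (e i) * (e i) = 1 := by
    have h := real_inner_self_eq_norm_sq e
    rw [he] at h
    rw [one_pow, PiLp.inner_apply] at h
    simpa [RCLike.inner_apply, starRingEnd_apply, ← sq] using h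
  have hei : ∀ i : Fin n, ⟪e, EuclideanSpace.single i 1⟫ = e i := by
    intro i
    simp [EuclideanSpace.inner_single_right]
  have hii : ∀ i : Fin n, ⟪(EuclideanSpace.single i 1 : Euc n), EuclideanSpace.single i 1⟫
      = (1:ℝ) := by
    intro i
    simp [EuclideanSpace.inner_single_right, EuclideanSpace.single_apply]
  rw [EucLap]
  have hterm : ∀ i : Fin n, DirDeriv2 (cmpF n x e a c1 c2) (EuclideanSpace.single i 1) p =
      2 * (n:ℝ) * c2 * ((e i) * (e i)) - 2 * c2 := by
    intro i
    rw [cmpF_dd2, hei, hii]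
    ring
  rw [Finset.sum_congr rfl (fun i _ => hterm i)]
  rw [Finset.sum_sub_distrib, ← Finset.mul_sum, hsum]
  simp
  ring

lemma arith_A (n : ℕ) (hn : 1 ≤ n) (a₀ ε ω : ℝ) (hε : 0 < ε)
    (hω1 : -1 ≤ ω) (hω2 : (4*(n:ℝ)+4) * ω ≤ 1) :
    (a₀ + ε) + (ε*(4*(n:ℝ)-2))*ω + (4*ε)*((n:ℝ)*ω^2 - 1) ≤ a₀ - ε := by
  have hn' : (1:ℝ) ≤ (n:ℝ) := by exact_mod_cast hn
  have h2 : 2*(n:ℝ)*ω - 1 ≤ 0 := by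
    rcases le_or_gt ω 0 with h | h
    · nlinarith
    · nlinarith
  nlinarith [mul_nonneg (by linarith : (0:ℝ) ≤ 2*ε)
    (mul_nonneg (by linarith : (0:ℝ) ≤ 1 - 2*(n:ℝ)*ω) (by linarith : (0:ℝ) ≤ ω + 1))]

lemma arith_B (n : ℕ) (hn : 1 ≤ n) (a₀ ε ω : ℝ) (hε : 0 < ε)
    (hω1 : -1 ≤ ω) (hω2 : ω ≤ 1) :
    (a₀ + ε) + (ε*(4*(n:ℝ)-2))*ω + (4*ε)*((n:ℝ)*ω^2 - 1) ≤ a₀ + 16*((n:ℝ)+1)*ε := by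
  have hn' : (1:ℝ) ≤ (n:ℝ) := by exact_mod_cast hn
  have h2 : 0 ≤ 2*(n:ℝ)*ω + 4*(n:ℝ) - 1 := by nlinarith
  nlinarith [mul_nonneg (mul_nonneg hε.le (by linarith : (0:ℝ) ≤ 1 - ω)) h2]

lemma wpos_aux (m s w : ℝ) (hm : 0 ≤ m) (hs : 0 < s) (h : s ≤ (4*m+4)*w) : 0 < w := by
  by_contra hw
  push_neg at hw
  have : (4*m+4)*w ≤ 0 := mul_nonpos_of_nonneg_of_nonpos (by linarith) hw
  linarith

lemma good_case_aux (m r s w : ℝ) (hr : 0 < r) (hs : 0 < s) (hw : 0 < w)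
    (hsr : s*(4*m+4) ≤ r) (hcase : s ≤ (4*m+4)*w) : s^2 - 2*r*w + r^2 < r^2 := by
  nlinarith [mul_le_mul_of_nonneg_left hcase hs.le,
    mul_le_mul_of_nonneg_right hsr hw.le, mul_pos hr hw]

/-- A set containing an open ball internally tangent at `x` is not thin at `x`. -/
lemma tangent_ball_not_thin {n : ℕ} (hn : 1 ≤ n) (A : Set (Euc n)) (x e : Euc n)
    (he : ‖e‖ = 1) (r : ℝ) (hr : 0 < r) (hball : ball (x + r • e) r ⊆ A) :
    ¬ EucThinAt A x := by
  have hn' : (1:ℝ) ≤ (n:ℝ) := by exact_mod_cast hn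
  have hene : e ≠ 0 := by
    intro h; rw [h, norm_zero] at he; norm_num at he
  have hmem : ∀ t : ℝ, 0 < t → t ≤ r → x + t • e ∈ A \ {x} := by
    intro t ht htr
    constructor
    · apply hball
      rw [mem_ball_iff_norm]
      have hdiff : x + t • e - (x + r • e) = (t - r) • e := by
        rw [sub_smul]; abel
      rw [hdiff, norm_smul, he, mul_one, Real.norm_eq_abs, abs_of_nonpos (by linarith)]
      linarith
    · simp only [mem_singleton_iff]
      intro hcontr
      have h0 : t • e = 0 := by
        have := congrArg (fun z => z - x) hcontr
        simpa [add_sub_cancel_left] using this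
      rcases smul_eq_zero.mp h0 with h | h
      · exact ht.ne' h
      · exact hene h
  intro thin
  rcases thin with hcl | ⟨W, hWo, hxW, u, hsup, hlt⟩
  · apply hcl
    rw [Metric.mem_closure_iff]
    intro δ hδ
    refine ⟨x + (min (δ/2) r) • e, hmem _ (lt_min (by linarith) hr) (min_le_right _ _), ?_⟩
    rw [dist_eq_norm]
    have hdiff : x - (x + (min (δ/2) r) • e) = -((min (δ/2) r) • e) := by abel
    rw [hdiff, norm_neg, norm_smul, he, mul_one, Real.norm_eq_abs,
      abs_of_pos (lt_min (by linarith) hr)]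
    have := min_le_left (δ/2) r
    linarith
  · obtain ⟨hWo', hlsc, hnb, hnt, hcmp⟩ := hsup
    have hub : u x ≠ ⊥ := hnb x hxW
    have hut : u x ≠ ⊤ := ne_top_of_lt hlt
    set a₀ := (u x).toReal with ha₀
    have hux : u x = (a₀ : EReal) := (EReal.coe_toReal hut hub).symm
    obtain ⟨c', hc1, hc2⟩ := exists_between hlt
    have hct : c' ≠ ⊤ := ne_top_of_lt hc2
    have hcb : c' ≠ ⊥ := by
      intro hbot
      rw [hbot] at hc1
      exact not_lt_bot hc1
    set c₀ := c'.toReal with hc₀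
    have hc' : c' = (c₀ : EReal) := (EReal.coe_toReal hct hcb).symm
    have had : a₀ < c₀ := by
      rw [hux, hc'] at hc1
      exact_mod_cast hc1
    set d := c₀ - a₀ with hd
    have hdpos : 0 < d := by simp [hd]; linarith
    set ε := d / (16*((n:ℝ)+1)) with hεdef
    have hεpos : 0 < ε := div_pos hdpos (by positivity)
    have hεd : 16*((n:ℝ)+1)*ε = d := by
      rw [hεdef]; field_simp
    have ev1 : ∀ᶠ y in 𝓝[A \ {x}] x, c' < u y := eventually_lt_of_lt_liminf hc2
    obtain ⟨T, hTo, hxT, hT⟩ := mem_nhdsWithin.mp ev1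
    have hlow : ((a₀ - ε : ℝ) : EReal) < u x := by
      rw [hux]
      exact_mod_cast (by linarith : a₀ - ε < a₀)
    have ev2 := hlsc x hxW _ hlow
    obtain ⟨T', hT'o, hxT', hT'⟩ := mem_nhdsWithin.mp ev2
    have hWTT : IsOpen (W ∩ T ∩ T') := ((hWo.inter hTo).inter hT'o)
    obtain ⟨ρ, hρpos, hρ⟩ := Metric.isOpen_iff.mp hWTT x ⟨⟨hxW, hxT⟩, hxT'⟩
    set s := min (ρ/2) (r/(4*(n:ℝ)+4)) with hsdef
    have hspos : 0 < s := lt_min (by linarith) (by positivity)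
    have hsball : closedBall x s ⊆ ball x ρ :=
      closedBall_subset_ball (by
        have := min_le_left (ρ/2) (r/(4*(n:ℝ)+4))
        rw [hsdef]; linarith)
    have hsr : s * (4*(n:ℝ)+4) ≤ r := by
      have h1 : s ≤ r/(4*(n:ℝ)+4) := min_le_right _ _
      have h2 : (0:ℝ) < 4*(n:ℝ)+4 := by positivity
      calc s * (4*(n:ℝ)+4) ≤ (r/(4*(n:ℝ)+4)) * (4*(n:ℝ)+4) := by
            exact mul_le_mul_of_nonneg_right h1 h2.le
        _ = r := by field_simp
    set tc := ε*(4*(n:ℝ)-2) with htc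
    set Q := (4:ℝ)*ε with hQ
    set h := cmpF n x e (a₀ + ε) (tc/s) (Q/s^2) with hhdef
    have hcd := cmpF_contDiff 2 n x e (a₀ + ε) (tc/s) (Q/s^2)
    have hcont : ContinuousOn h (closedBall x s) := hcd.continuous.continuousOn
    have hharm : HarmOn h (ball x s) := by
      refine ⟨isOpen_ball, hcd.contDiffOn, ?_⟩
      intro p _
      exact cmpF_lap n x e he _ _ _ p
    have hsubW : closedBall x s ⊆ W := fun y hy => (hρ (hsball hy)).1.1
    have hbd : ∀ y ∈ sphere x s, (h y : EReal) ≤ u y := by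
      intro y hy
      have hys : ‖y - x‖ = s := mem_sphere_iff_norm.mp hy
      have hyW : y ∈ W ∩ T ∩ T' := hρ (hsball (sphere_subset_closedBall hy))
      set w := ⟪e, y - x⟫ with hwdef
      have hwabs : |w| ≤ s := by
        have := abs_real_inner_le_norm e (y - x)
        rw [he, hys, one_mul] at this
        exact this
      rw [abs_le] at hwabs
      set ω := w / s with hωdef
      have hω1 : -1 ≤ ω := by
        rw [hωdef, le_div_iff₀ hspos]
        linarith
      have hω2 : ω ≤ 1 := by
        rw [hωdef, div_le_one hspos]
        linarith
      have hww : w = ω * s := by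
        rw [hωdef]; field_simp
      have hval : h y = (a₀+ε) + tc*ω + Q*((n:ℝ)*ω^2 - 1) := by
        have hself : ⟪y - x, y - x⟫ = s^2 := by
          rw [real_inner_self_eq_norm_sq, hys]
        rw [hhdef]
        show (a₀+ε) + (tc/s) * ⟪e, y - x⟫ +
          (Q/s^2) * ((n:ℝ) * (⟪e, y - x⟫ * ⟪e, y - x⟫) - ⟪y - x, y - x⟫) = _
        rw [← hwdef, hself, hww]
        field_simp
      rcases le_total ((4*(n:ℝ)+4) * w) s with hcase | hcase
      · have hA : h y ≤ a₀ - ε := by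
          rw [hval, htc, hQ]
          refine arith_A n hn a₀ ε ω hεpos hω1 ?_
          rw [hωdef]
          rw [mul_div_assoc']
          rw [div_le_one hspos]
          exact hcase
        have hu : ((a₀ - ε : ℝ):EReal) < u y := hT' ⟨hyW.2, hyW.1.1⟩
        calc (h y : EReal) ≤ ((a₀ - ε : ℝ) : EReal) := EReal.coe_le_coe_iff.mpr hA
          _ ≤ u y := hu.le
      · have hwpos : 0 < w := wpos_aux (n:ℝ) s w (by positivity) hspos hcase
        have hyA : y ∈ A := by
          apply hball
          rw [mem_ball_iff_norm]
          have hdiff : y - (x + r • e) = (y - x) - r • e := by abel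
          have hexp : ‖y - (x + r • e)‖^2 = s^2 - 2*r*w + r^2 := by
            rw [hdiff, norm_sub_sq_real, hys, norm_smul, he, mul_one]
            have hir : ⟪y - x, r • e⟫ = r * w := by
              rw [real_inner_smul_right, hwdef, real_inner_comm]
            rw [hir, Real.norm_eq_abs, abs_of_pos hr]
            ring
          have hlt2 : ‖y - (x + r • e)‖^2 < r^2 := by
            rw [hexp]
            exact good_case_aux (n:ℝ) r s w hr hspos hwpos hsr hcase
          exact lt_of_pow_lt_pow_left₀ 2 hr.le hlt2
        have hy_ne : y ≠ x := by
          intro hyx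
          rw [hyx, sub_self, norm_zero] at hys
          exact hspos.ne hys
        have hu : c' < u y := hT ⟨hyW.1.2, hyA, hy_ne⟩
        have hB : h y ≤ c₀ := by
          rw [hval, htc, hQ]
          have := arith_B n hn a₀ ε ω hεpos hω1 hω2
          have hc0d : a₀ + 16*((n:ℝ)+1)*ε = c₀ := by
            rw [hεd, hd]; ring
          linarith
        calc (h y : EReal) ≤ (c₀ : EReal) := EReal.coe_le_coe_iff.mpr hB
          _ = c' := hc'.symm
          _ ≤ u y := hu.le
    have hfinal := hcmp x s hspos hsubW h hcont hharm hbd x (mem_ball_self hspos)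
    have hx0 : h x = a₀ + ε := by
      rw [hhdef]
      show (a₀+ε) + (tc/s) * ⟪e, x - x⟫ +
        (Q/s^2) * ((n:ℝ) * (⟪e, x - x⟫ * ⟪e, x - x⟫) - ⟪x - x, x - x⟫) = _
      simp
    rw [hx0, hux] at hfinal
    have : a₀ + ε ≤ a₀ := EReal.coe_le_coe_iff.mp hfinal
    linarith


lemma final_pos_aux (G i N K r fy : ℝ) (hG : 0 < G) (hr : 0 < r) (hK : 0 ≤ K) (hN : 0 < N)
    (h1 : N^2 < 2*r*i) (h2 : 2*r*(K+1) ≤ G) (h3 : G*i - K*(N*N) ≤ fy) : 0 < fy := by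
  by_contra hfy
  push_neg at hfy
  have h4 : 2*r*fy ≤ 0 := mul_nonpos_of_nonneg_of_nonpos (by linarith) hfy
  nlinarith [mul_lt_mul_of_pos_left h1 hG, mul_le_mul_of_nonneg_right h2 (mul_pos hN hN).le,
    mul_le_mul_of_nonneg_left h3 (by linarith : (0:ℝ) ≤ 2*r), mul_pos hr (mul_pos hN hN)]

lemma exists_tangent_ball {n : ℕ} (V : Set (Euc n)) (hVo : IsOpen V) (f : Euc n → ℝ)
    (x : Euc n) (hxV : x ∈ V) (hf : ContDiff ℝ (⊤:ℕ∞) f) (hfx : f x = 0)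
    (hg : fderiv ℝ f x ≠ 0) :
    ∃ (e : Euc n) (r : ℝ), ‖e‖ = 1 ∧ 0 < r ∧ ball (x + r • e) r ⊆ {y ∈ V | 0 < f y} := by
  set g := fderiv ℝ f x with hgdef
  set grad := (InnerProductSpace.toDual ℝ (Euc n)).symm g with hgrad_def
  have hgradv : ∀ v, ⟪grad, v⟫ = g v := fun v => InnerProductSpace.toDual_symm_apply
  have hgradne : grad ≠ 0 := by
    intro h0
    exact hg ((LinearIsometryEquiv.map_eq_zero_iff _).mp h0)
  have hgpos : 0 < ‖grad‖ := norm_pos_iff.mpr hgradne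
  set e := ‖grad‖⁻¹ • grad with he_def
  have he : ‖e‖ = 1 := by
    rw [he_def, norm_smul, Real.norm_eq_abs, abs_inv, abs_of_pos hgpos,
      inv_mul_cancel₀ hgpos.ne']
  have hgrad_e : grad = ‖grad‖ • e := by
    rw [he_def, smul_smul, mul_inv_cancel₀ hgpos.ne', one_smul]
  have hf' : ContDiff ℝ 1 (fderiv ℝ f) :=
    ContDiff.fderiv_right hf (by norm_cast)
  obtain ⟨K, t, ht, hlip⟩ := hf'.locallyLipschitz x
  have htV : t ∩ V ∈ 𝓝 x := Filter.inter_mem ht (hVo.mem_nhds hxV)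
  obtain ⟨ρ', hρ'pos, hρ'⟩ := Metric.mem_nhds_iff.mp htV
  set ρ := ρ'/2 with hρ_def
  have hρpos : 0 < ρ := by rw [hρ_def]; linarith
  have hρ : closedBall x ρ ⊆ t ∩ V := fun z hz => hρ' (lt_of_le_of_lt
    (mem_closedBall.mp hz) (by rw [hρ_def]; linarith))
  have hxt : x ∈ t := (hρ (mem_closedBall_self hρpos.le)).1
  have htay : ∀ y ∈ closedBall x ρ, |f y - g (y - x)| ≤ (K:ℝ) * (‖y - x‖ * ‖y - x‖) := by
    intro y hy
    set F := fun z : Euc n => f z - g z with hF_def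
    have hdF : ∀ z : Euc n, HasFDerivAt F (fderiv ℝ f z - g) z := fun z =>
      ((hf.differentiable (by norm_cast) z).hasFDerivAt).sub g.hasFDerivAt
    have hsub2 : closedBall x ‖y - x‖ ⊆ closedBall x ρ :=
      closedBall_subset_closedBall (mem_closedBall_iff_norm.mp hy)
    have key := Convex.norm_image_sub_le_of_norm_fderiv_le
      (f := F) (s := closedBall x ‖y - x‖) (C := (K:ℝ) * ‖y - x‖)
      (fun z _ => (hdF z).differentiableAt)
      (fun z hz => by
        rw [(hdF z).fderiv]
        have h1 : z ∈ t := (hρ (hsub2 hz)).1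
        calc ‖fderiv ℝ f z - g‖ = dist (fderiv ℝ f z) (fderiv ℝ f x) := by
              rw [dist_eq_norm, hgdef]
          _ ≤ (K:ℝ) * dist z x := hlip.dist_le_mul z h1 x hxt
          _ ≤ (K:ℝ) * ‖y - x‖ := by
              refine mul_le_mul_of_nonneg_left ?_ K.coe_nonneg
              rw [dist_eq_norm]
              exact mem_closedBall_iff_norm.mp hz)
      (convex_closedBall x ‖y - x‖)
      (mem_closedBall_self (norm_nonneg _)) (mem_closedBall_iff_norm.mpr le_rfl)
    have hFx : F y - F x = f y - g (y - x) := by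
      rw [hF_def]
      simp only [map_sub, hfx]
      ring
    rw [hFx] at key
    rw [← Real.norm_eq_abs]
    calc ‖f y - g (y - x)‖ ≤ ((K:ℝ) * ‖y - x‖) * ‖y - x‖ := key
      _ = (K:ℝ) * (‖y - x‖ * ‖y - x‖) := by ring
  set r := min (ρ/2) (‖grad‖/(2*((K:ℝ)+1))) with hr_def
  have hrpos : 0 < r := lt_min (by linarith) (by positivity)
  refine ⟨e, r, he, hrpos, ?_⟩
  intro y hy
  have hyball : ‖y - (x + r • e)‖ < r := mem_ball_iff_norm.mp hy
  have hyx : ‖y - x‖ < 2*r := by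
    have hsplit : y - x = (y - (x + r • e)) + r • e := by abel
    have := norm_add_le (y - (x + r • e)) (r • e)
    rw [← hsplit, norm_smul, he, mul_one, Real.norm_eq_abs, abs_of_pos hrpos] at this
    linarith
  have hyρ : y ∈ closedBall x ρ := by
    rw [mem_closedBall_iff_norm]
    have h2r : 2*r ≤ ρ := by
      have := min_le_left (ρ/2) (‖grad‖/(2*((K:ℝ)+1)))
      rw [hr_def]
      linarith [this]
    linarith
  have hyV : y ∈ V := (hρ hyρ).2
  have hyne : y ≠ x := by
    intro h0
    rw [h0] at hyball
    have hd : x - (x + r • e) = -(r • e) := by abel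
    rw [hd, norm_neg, norm_smul, he, mul_one, Real.norm_eq_abs, abs_of_pos hrpos] at hyball
    exact lt_irrefl r hyball
  have hnpos : 0 < ‖y - x‖ := by
    rw [norm_pos_iff]
    exact sub_ne_zero.mpr hyne
  have hinner : ‖y - x‖^2 < 2*r*⟪e, y - x⟫ := by
    have h1 : ‖y - (x + r • e)‖^2 < r^2 :=
      pow_lt_pow_left₀ hyball (norm_nonneg _) (by norm_num)
    have hd : y - (x + r • e) = (y - x) - r • e := by abel
    rw [hd, norm_sub_sq_real, norm_smul, he, mul_one, Real.norm_eq_abs, abs_of_pos hrpos] at h1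
    have hir : ⟪y - x, r • e⟫ = r * ⟪e, y - x⟫ := by
      rw [real_inner_smul_right, real_inner_comm]
    rw [hir] at h1
    linarith
  have htb := htay y hyρ
  have hgy : g (y - x) = ‖grad‖ * ⟪e, y - x⟫ := by
    rw [← hgradv]
    conv_lhs => rw [hgrad_e]
    rw [real_inner_smul_left]
  have hKb : 2*r*((K:ℝ)+1) ≤ ‖grad‖ := by
    have h1 : r ≤ ‖grad‖/(2*((K:ℝ)+1)) := min_le_right _ _
    have h2 : (0:ℝ) < 2*((K:ℝ)+1) := by positivity
    calc 2*r*((K:ℝ)+1) = r * (2*((K:ℝ)+1)) := by ring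
      _ ≤ (‖grad‖/(2*((K:ℝ)+1))) * (2*((K:ℝ)+1)) := mul_le_mul_of_nonneg_right h1 h2.le
      _ = ‖grad‖ := by field_simp
  have hlb : ‖grad‖ * ⟪e, y - x⟫ - (K:ℝ) * (‖y - x‖ * ‖y - x‖) ≤ f y := by
    have := abs_le.mp htb
    rw [hgy] at this
    linarith [this.1]
  exact ⟨hyV, final_pos_aux ‖grad‖ ⟪e, y - x⟫ ‖y - x‖ (K:ℝ) r (f y)
    hgpos hrpos K.coe_nonneg hnpos hinner hKb hlb⟩

end NotThinAux

/-- If `X` is a smooth closed hypersurface or a smoothly bordered domain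
in an open set `U ⊆ ℝⁿ` and `x ∈ ∂X`, then `U \ X` is not thin at `x`. -/
theorem complement_not_thin_at_boundary
    (n : ℕ) (U X : Set (Euc n)) (hUo : IsOpen U)
    (hX : IsSmoothClosedHypersurfaceIn X U ∨ IsSmoothlyBorderedDomainIn X U)
    (x : Euc n) (hx : x ∈ frontier X) (hxU : x ∈ U) :
    ¬ EucThinAt (U \ X) x := by
  have hxcl : x ∈ closure X := frontier_subset_closure hx
  obtain ⟨V, f, hVo, hxV, hVU, hfsm, hfx0, hP, hgne⟩ :
      ∃ (V : Set (Euc n)) (f : Euc n → ℝ), IsOpen V ∧ x ∈ V ∧ V ⊆ U ∧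
        ContDiff ℝ (⊤:ℕ∞) f ∧ f x = 0 ∧ (∀ y ∈ V, 0 < f y → y ∉ X) ∧
        fderiv ℝ f x ≠ 0 := by
    rcases hX with ⟨hXU, hclX, hloc⟩ | ⟨hXU, hclX, hconn, hdense, hloc⟩
    · have hxX : x ∈ X := hclX ⟨hxcl, hxU⟩
      obtain ⟨V, f, hVo, hxV, hVU, hfsm, hchar, hgrad⟩ := hloc x hxX
      refine ⟨V, f, hVo, hxV, hVU, hfsm, (hchar x hxV).mp hxX, ?_, hgrad x hxV⟩
      intro y hyV hfy hyX
      rw [(hchar y hyV).mp hyX] at hfy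
      exact lt_irrefl 0 hfy
    · obtain ⟨V, f, hVo, hxV, hVU, hfsm, hchar, hgrad⟩ := hloc x ⟨hx, hxU⟩
      have hxX : x ∈ X := hclX ⟨hxcl, hxU⟩
      have hfle : f x ≤ 0 := (hchar x hxV).mp hxX
      have hfge : 0 ≤ f x := by
        have hxcc : x ∈ closure Xᶜ := by
          rw [closure_compl]
          exact hx.2
        haveI hne : (𝓝[Xᶜ] x).NeBot := mem_closure_iff_nhdsWithin_neBot.mp hxcc
        have hev : ∀ᶠ y in 𝓝[Xᶜ] x, 0 ≤ f y := by
          have hVmem : V ∈ 𝓝[Xᶜ] x := nhdsWithin_le_nhds (hVo.mem_nhds hxV)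
          have hCmem : Xᶜ ∈ 𝓝[Xᶜ] x := self_mem_nhdsWithin
          filter_upwards [hVmem, hCmem] with y hyV hyC
          by_contra hlt0
          push_neg at hlt0
          exact hyC ((hchar y hyV).mpr hlt0.le)
        exact ge_of_tendsto ((hfsm.continuous.tendsto x).mono_left nhdsWithin_le_nhds) hev
      refine ⟨V, f, hVo, hxV, hVU, hfsm, le_antisymm hfle hfge, ?_, hgrad x hxV⟩
      intro y hyV hfy hyX
      exact absurd ((hchar y hyV).mp hyX) (by linarith)
  have hn : 1 ≤ n := by
    rcases Nat.eq_zero_or_pos n with h0 | h1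
    · exfalso
      subst h0
      apply hgne
      have hv0 : ∀ v : Euc 0, v = 0 := fun v => by ext i; exact i.elim0
      ext v
      rw [hv0 v]
      simp
    · exact h1
  obtain ⟨e, r, he, hr, hball⟩ := exists_tangent_ball V hVo f x hxV hfsm hfx0 hgne
  have hsub : {y ∈ V | 0 < f y} ⊆ U \ X := fun y hy => ⟨hVU hy.1, hP y hy.1 hy.2⟩
  exact tangent_ball_not_thin hn (U \ X) x e he r hr (hball.trans hsub)

end
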